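/- In the parity tree, let m be a node at level ℓ+1 ≥ 2, and let α, β range over nodes at levels ≤ ℓ. The product b_m·b_α·b_β is identically 1 if and only if {α, β} = {c_1[m], c_2[m]} (the two children of m). -/

import Mathlib

lemma my_div_pow (q r s t : ℕ) (ht : t ≤ s) :
    (q * 2^s + r) / 2^t = q * 2^(s-t) + r / 2^t := by
  have h1 : q * 2^s = q * 2^(s-t) * 2^t := by
    rw [mul_assoc, ← pow_add]; congr 2; omega
  rw [h1, add_comm, Nat.add_mul_div_right _ _ (Nat.two_pow_pos t), add_comm]

lemma my_divA (q r s : ℕ) (hr : r < 2^s) : (q * 2^s + r) / 2^(s+1) = q / 2 := by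
  rw [pow_succ, ← Nat.div_div_eq_div_mul, my_div_pow q r s s le_rfl,
    Nat.div_eq_of_lt hr, Nat.sub_self, pow_zero, mul_one, add_zero]

lemma my_block (k t s i : ℕ) (ht : t ≤ s) (hk : k / 2^t = i) :
    k / 2^s = i / 2^(s-t) := by
  rw [← hk, Nat.div_div_eq_div_mul, ← pow_add]; congr 2; omega

lemma my_aux0 (M s ta tb ia ib im : ℕ) (him : im < 2^M)
    (hta : ta ≤ s) (htb : tb ≤ s)
    (key : ∀ k, k < 2^(s+1+M) → (k/2^(s+1) = im ↔ (k/2^ta = ia ↔ ¬(k/2^tb = ib))))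
    (hQ : (2*im*2^s)/2^ta = ia) :
    ta = s ∧ ia = 2*im ∧ tb = s ∧ ib = 2*im+1 := by
  have hpow : ∀ t : ℕ, (0:ℕ) < 2^t := fun t => Nat.two_pow_pos t
  have hbound : ∀ q r : ℕ, q ≤ 2*im+1 → r < 2^s → q*2^s + r < 2^(s+1+M) := by
    intro q r hq hr
    have e1 : 2^(s+1+M) = 2^s*(2*2^M) := by rw [pow_add, pow_add, pow_one]; ring
    have := hpow s
    nlinarith
  have hia' : ia = 2*im*2^(s-ta) := by
    have := my_div_pow (2*im) 0 s ta hta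
    rw [add_zero] at this
    rw [← hQ, this, Nat.zero_div, add_zero]
  -- k2 = (2im+1)*2^s is in C
  have hk2b : (2*im+1)*2^s + 0 < 2^(s+1+M) := hbound _ 0 le_rfl (hpow s)
  have hk2A : ((2*im+1)*2^s + 0)/2^(s+1) = im := by rw [my_divA _ _ _ (hpow s)]; omega
  have hk2s : ((2*im+1)*2^s + 0)/2^s = 2*im+1 := by
    rw [my_div_pow _ _ _ _ le_rfl, Nat.sub_self, pow_zero, mul_one, Nat.zero_div, add_zero]
  have hk2 := (key _ hk2b).1 hk2A
  have hQ2 : ¬ (((2*im+1)*2^s + 0)/2^ta = ia) := by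
    intro h
    have := my_block _ _ s _ hta h
    rw [hk2s, hia', Nat.mul_div_cancel _ (hpow (s-ta))] at this
    omega
  have hR2 : ((2*im+1)*2^s + 0)/2^tb = ib := by tauto
  have hib' : ib = (2*im+1)*2^(s-tb) := by
    rw [← hR2, my_div_pow _ _ _ _ htb, Nat.zero_div, add_zero]
  -- every element of child1 is in B
  have hB : ∀ r, r < 2^s → (2*im*2^s + r)/2^ta = ia := by
    intro r hr
    have hb1 : 2*im*2^s + r < 2^(s+1+M) := hbound _ _ (by omega) hr
    have hA1 : (2*im*2^s + r)/2^(s+1) = im := by rw [my_divA _ _ _ hr]; omega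
    have hkey := (key _ hb1).1 hA1
    have hnR : ¬ ((2*im*2^s + r)/2^tb = ib) := by
      intro h
      have := my_block _ _ s _ htb h
      rw [my_div_pow _ _ _ _ le_rfl, Nat.sub_self, pow_zero, mul_one,
        Nat.div_eq_of_lt hr, add_zero, hib', Nat.mul_div_cancel _ (hpow (s-tb))] at this
      omega
    tauto
  -- every element of child2 is in C
  have hC : ∀ r, r < 2^s → ((2*im+1)*2^s + r)/2^tb = ib := by
    intro r hr
    have hb1 : (2*im+1)*2^s + r < 2^(s+1+M) := hbound _ _ le_rfl hr
    have hA1 : ((2*im+1)*2^s + r)/2^(s+1) = im := by rw [my_divA _ _ _ hr]; omega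
    have hkey := (key _ hb1).1 hA1
    have hnQ : ¬ (((2*im+1)*2^s + r)/2^ta = ia) := by
      intro h
      have := my_block _ _ s _ hta h
      rw [my_div_pow _ _ _ _ le_rfl, Nat.sub_self, pow_zero, mul_one,
        Nat.div_eq_of_lt hr, add_zero, hia', Nat.mul_div_cancel _ (hpow (s-ta))] at this
      omega
    tauto
  have htas : ta = s := by
    by_contra h
    have hlt : ta < s := lt_of_le_of_ne hta h
    have hrs : (2:ℕ)^ta < 2^s := Nat.pow_lt_pow_right (by norm_num) hlt
    have := hB (2^ta) hrs
    rw [my_div_pow _ _ _ _ hta, Nat.div_self (hpow ta)] at this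
    omega
  have htbs : tb = s := by
    by_contra h
    have hlt : tb < s := lt_of_le_of_ne htb h
    have hrs : (2:ℕ)^tb < 2^s := Nat.pow_lt_pow_right (by norm_num) hlt
    have := hC (2^tb) hrs
    rw [my_div_pow _ _ _ _ htb, Nat.div_self (hpow tb)] at this
    omega
  subst htas; subst htbs
  rw [Nat.sub_self, pow_zero, mul_one] at hia' hib'
  exact ⟨rfl, hia', rfl, hib'⟩

lemma my_aux (M s ta tb ia ib im : ℕ) (him : im < 2^M)
    (hta : ta ≤ s) (htb : tb ≤ s)
    (key : ∀ k, k < 2^(s+1+M) → (k/2^(s+1) = im ↔ (k/2^ta = ia ↔ ¬(k/2^tb = ib)))) :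
    (ta = s ∧ ia = 2*im ∧ tb = s ∧ ib = 2*im+1) ∨
    (tb = s ∧ ib = 2*im ∧ ta = s ∧ ia = 2*im+1) := by
  have hpow : ∀ t : ℕ, (0:ℕ) < 2^t := fun t => Nat.two_pow_pos t
  by_cases hq : (2*im*2^s)/2^ta = ia
  · exact Or.inl (my_aux0 M s ta tb ia ib im him hta htb key hq)
  · right
    have key' : ∀ k, k < 2^(s+1+M) → (k/2^(s+1) = im ↔ (k/2^tb = ib ↔ ¬(k/2^ta = ia))) := by
      intro k hk; have := key k hk; tauto
    apply my_aux0 M s tb ta ib ia im him htb hta key'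
    -- hQ for C : k1 ∈ C
    have hb1 : 2*im*2^s + 0 < 2^(s+1+M) := by
      have e1 : 2^(s+1+M) = 2^s*(2*2^M) := by rw [pow_add, pow_add, pow_one]; ring
      have := hpow s
      nlinarith
    have hA1 : (2*im*2^s + 0)/2^(s+1) = im := by rw [my_divA _ _ _ (hpow s)]; omega
    have hkey := (key _ hb1).1 hA1
    simp only [add_zero] at hkey
    tauto


lemma my_prod_image_ite {N n : ℕ} (leaf : Fin N → Fin n) (hinj : Function.Injective leaf)
    (e : Finset (Fin N)) (k : Fin N) :
    (∏ j ∈ e.image leaf, (if j = leaf k then (-1:ℝ) else 1)) = if k ∈ e then -1 else 1 := by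
  rw [Finset.prod_image (fun x _ y _ h => hinj h)]
  have h1 : ∀ x ∈ e, (if leaf x = leaf k then (-1:ℝ) else 1) = (if x = k then -1 else 1) := by
    intro x _
    by_cases h : x = k
    · simp [h]
    · rw [if_neg h, if_neg (fun hc => h (hinj hc))]
  rw [Finset.prod_congr rfl h1, Finset.prod_ite_eq' e k (fun _ => (-1:ℝ))]

/-- In the parity tree, for a node m at level ℓ+1 and nodes α = (ℓa, ia),
β = (ℓb, ib) at levels ≤ ℓ, the product b_m·b_α·b_β is identically 1 (over all
±1 input assignments) iff {α, β} is exactly the pair of children of m. -/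
theorem stmt_15 (L n : ℕ) (leaf : Fin (2 ^ L) → Fin n)
    (hinj : Function.Injective leaf)
    (supp : ℕ → ℕ → Finset (Fin n))
    (hsupp : ∀ ℓ i, supp ℓ i = (Finset.univ.filter
        (fun j : Fin (2 ^ L) => (j : ℕ) / 2 ^ (ℓ - 1) = i)).image leaf)
    (ℓ : ℕ) (hℓ : 1 ≤ ℓ) (hℓL : ℓ ≤ L)
    (im : ℕ) (him : im < 2 ^ (L - ℓ))
    (ℓa ia ℓb ib : ℕ)
    (hℓa1 : 1 ≤ ℓa) (hℓa2 : ℓa ≤ ℓ) (hia : ia < 2 ^ (L + 1 - ℓa))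
    (hℓb1 : 1 ≤ ℓb) (hℓb2 : ℓb ≤ ℓ) (hib : ib < 2 ^ (L + 1 - ℓb)) :
    (∀ b : Fin n → ℝ, (∀ j, b j = 1 ∨ b j = -1) →
        (∏ j ∈ supp (ℓ + 1) im, b j) * (∏ j ∈ supp ℓa ia, b j) *
          (∏ j ∈ supp ℓb ib, b j) = 1) ↔
      ({(ℓa, ia), (ℓb, ib)} : Set (ℕ × ℕ)) = {(ℓ, 2 * im), (ℓ, 2 * im + 1)} := by
  obtain ⟨s, rfl⟩ : ∃ s, ℓ = s + 1 := ⟨ℓ - 1, by omega⟩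
  obtain ⟨ta, rfl⟩ : ∃ t, ℓa = t + 1 := ⟨ℓa - 1, by omega⟩
  obtain ⟨tb, rfl⟩ : ∃ t, ℓb = t + 1 := ⟨ℓb - 1, by omega⟩
  obtain ⟨M, rfl⟩ : ∃ M, L = s + 1 + M := ⟨L - (s + 1), by omega⟩
  have hta : ta ≤ s := by omega
  have htb : tb ≤ s := by omega
  have himM : im < 2 ^ M := by
    have : s + 1 + M - (s + 1) = M := by omega
    rwa [this] at him
  constructor
  · intro H
    have keyN : ∀ k : ℕ, k < 2^(s+1+M) →
        ((k/2^(s+1) = im) ↔ ((k/2^ta = ia) ↔ ¬(k/2^tb = ib))) := by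
      intro k hk
      set kk : Fin (2^(s+1+M)) := ⟨k, hk⟩ with hkk
      set b : Fin n → ℝ := fun j => if j = leaf kk then -1 else 1 with hbdef
      have hb : ∀ j, b j = 1 ∨ b j = -1 := by
        intro j; by_cases h : j = leaf kk <;> simp [hbdef, h]
      have hH := H b hb
      rw [hsupp, hsupp, hsupp, hbdef] at hH
      rw [my_prod_image_ite leaf hinj _ kk, my_prod_image_ite leaf hinj _ kk,
        my_prod_image_ite leaf hinj _ kk] at hH
      simp only [Finset.mem_filter, Finset.mem_univ, true_and, hkk] at hH
      have e1 : s + 1 + 1 - 1 = s + 1 := by omega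
      have e2 : ta + 1 - 1 = ta := by omega
      have e3 : tb + 1 - 1 = tb := by omega
      rw [e1, e2, e3] at hH
      split_ifs at hH with h1 h2 h3 h2 h3 h3 <;> norm_num at hH <;> tauto
    rcases my_aux M s ta tb ia ib im himM hta htb keyN with ⟨h1, h2, h3, h4⟩ | ⟨h1, h2, h3, h4⟩
    · subst h1; subst h2; subst h3; subst h4; rfl
    · subst h1; subst h2; subst h3; subst h4; exact Set.pair_comm _ _
  · intro hset
    rw [Set.pair_eq_pair_iff] at hset
    have hdisj : Disjoint (supp (s+1) (2*im)) (supp (s+1) (2*im+1)) := by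
      rw [hsupp, hsupp, Finset.disjoint_image hinj, Finset.disjoint_filter]
      intro x _ h1 h2
      omega
    have hsplit : supp (s+1+1) im = supp (s+1) (2*im) ∪ supp (s+1) (2*im+1) := by
      rw [hsupp, hsupp, hsupp, ← Finset.image_union]
      congr 1
      ext k
      simp only [Finset.mem_filter, Finset.mem_univ, true_and, Finset.mem_union]
      have e1 : s + 1 + 1 - 1 = s + 1 := by omega
      have e2 : s + 1 - 1 = s := by omega
      rw [e1, e2]
      have hdd : (k:ℕ)/2^(s+1) = (k:ℕ)/2^s/2 := by
        rw [Nat.div_div_eq_div_mul, ← pow_succ]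
      omega
    intro b hb
    have hsq : ∀ S : Finset (Fin n), (∏ j ∈ S, b j) * (∏ j ∈ S, b j) = 1 := by
      intro S
      rw [← Finset.prod_mul_distrib]
      apply Finset.prod_eq_one
      intro j _
      rcases hb j with h | h <;> rw [h] <;> norm_num
    rw [hsplit, Finset.prod_union hdisj]
    rcases hset with ⟨h1, h2⟩ | ⟨h1, h2⟩ <;>
      rw [Prod.mk.injEq] at h1 h2 <;>
      obtain ⟨h1a, h1b⟩ := h1 <;> obtain ⟨h2a, h2b⟩ := h2 <;>
      rw [h1a, h1b, h2a, h2b]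
    · calc (∏ j ∈ supp (s+1) (2*im), b j) * (∏ j ∈ supp (s+1) (2*im+1), b j) *
            (∏ j ∈ supp (s+1) (2*im), b j) * (∏ j ∈ supp (s+1) (2*im+1), b j)
          = ((∏ j ∈ supp (s+1) (2*im), b j) * (∏ j ∈ supp (s+1) (2*im), b j)) *
            ((∏ j ∈ supp (s+1) (2*im+1), b j) * (∏ j ∈ supp (s+1) (2*im+1), b j)) := by ring
        _ = 1 := by rw [hsq, hsq]; norm_num
    · calc (∏ j ∈ supp (s+1) (2*im), b j) * (∏ j ∈ supp (s+1) (2*im+1), b j) *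
            (∏ j ∈ supp (s+1) (2*im+1), b j) * (∏ j ∈ supp (s+1) (2*im), b j)
          = ((∏ j ∈ supp (s+1) (2*im), b j) * (∏ j ∈ supp (s+1) (2*im), b j)) *
            ((∏ j ∈ supp (s+1) (2*im+1), b j) * (∏ j ∈ supp (s+1) (2*im+1), b j)) := by ring
        _ = 1 := by rw [hsq, hsq]; norm_num
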